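/- Let a ∈ ℝ with a < −2. Then every z ∈ ℂ whose forward orbit {g_a^n(z) : n ≥ 0} under g_a(z) = z² + a is bounded is a real number; that is, the filled Julia set of g_a is contained in ℝ. -/

import Mathlib

/-- For real `a < −2`, every complex point with bounded forward orbit under
`g_a(z) = z² + a` is real: the filled Julia set of `g_a` is contained in `ℝ`. -/
theorem filledJulia_real (a : ℝ) (ha : a < -2) :
    ∀ z : ℂ, Bornology.IsBounded
        (Set.range fun n : ℕ => (fun w : ℂ => w ^ 2 + (a : ℂ))^[n] z) →
      z.im = 0 := by
  intro z hbdd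
  set Z : ℕ → ℂ := fun n => (fun w : ℂ => w ^ 2 + (a : ℂ))^[n] z with hZdef
  have hZ : ∀ n, Z (n + 1) = (Z n) ^ 2 + (a : ℂ) := by
    intro n
    simp only [hZdef]
    rw [Function.iterate_succ_apply']
  have hx : ∀ n, (Z (n + 1)).re = (Z n).re ^ 2 - (Z n).im ^ 2 + a := by
    intro n
    rw [hZ n]
    simp [pow_two, Complex.add_re, Complex.mul_re]
  have hy : ∀ n, (Z (n + 1)).im = 2 * (Z n).re * (Z n).im := by
    intro n
    rw [hZ n]
    simp [pow_two, Complex.add_im, Complex.mul_im]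
    ring
  -- the fixed point β
  set c : ℝ := -a with hcdef
  have hc : 2 < c := by simp [hcdef]; linarith
  have hs0 : (0:ℝ) ≤ 1 + 4 * c := by linarith
  set β : ℝ := (1 + Real.sqrt (1 + 4 * c)) / 2 with hβdef
  have hsq : Real.sqrt (1 + 4 * c) ^ 2 = 1 + 4 * c := Real.sq_sqrt hs0
  have hs3 : 3 < Real.sqrt (1 + 4 * c) := by
    nlinarith [Real.sqrt_nonneg (1 + 4 * c)]
  have hβ2 : 2 < β := by simp only [hβdef]; linarith
  have hβeq : β ^ 2 = β + c := by
    simp only [hβdef]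
    linear_combination hsq / 4
  -- uniform bound from boundedness
  obtain ⟨C, hC⟩ := isBounded_iff_forall_norm_le.1 hbdd
  have hCb : ∀ n, ‖Z n‖ ≤ C := by
    intro n
    have := hC (Z n) ⟨n, rfl⟩
    simpa using this
  -- growth step
  have hstep : ∀ n, ‖Z n‖ ^ 2 - c ≤ ‖Z (n + 1)‖ := by
    intro n
    have h1 : ‖(Z n) ^ 2‖ ≤ ‖(Z n) ^ 2 + (a:ℂ)‖ + ‖-(a:ℂ)‖ := by
      calc ‖(Z n) ^ 2‖ = ‖((Z n) ^ 2 + (a:ℂ)) + (-(a:ℂ))‖ := by ring_nf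
        _ ≤ _ := norm_add_le _ _
    rw [hZ n]
    have h2 : ‖-(a:ℂ)‖ = c := by
      simp [abs_of_neg (by linarith : a < 0), hcdef]
    have h3 : ‖(Z n) ^ 2‖ = ‖Z n‖ ^ 2 := by
      simp [map_pow]
    linarith [h1, h2.le, h3.le]
  -- every orbit point is within β of the origin
  have hBall : ∀ n, ‖Z n‖ ≤ β := by
    by_contra h
    push_neg at h
    obtain ⟨N, hN⟩ := h
    set ε : ℝ := ‖Z N‖ - β with hεdef
    have hε : 0 < ε := by simp only [hεdef]; linarith
    have grow : ∀ k, β + 4 ^ k * ε ≤ ‖Z (N + k)‖ := by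
      intro k
      induction k with
      | zero => simp [hεdef]
      | succ k ih =>
        have h1 := hstep (N + k)
        have hp : (0:ℝ) < 4 ^ k := by positivity
        have : β + 4 ^ (k + 1) * ε ≤ ‖Z (N + k)‖ ^ 2 - c := by
          have h4 : (4:ℝ) ^ (k + 1) = 4 * 4 ^ k := by ring
          nlinarith [ih, hp, hε, hβ2, hβeq, h4, mul_pos hp hε,
            mul_pos (by linarith : (0:ℝ) < β - 2) (mul_pos hp hε),
            mul_le_mul ih ih (by positivity : (0:ℝ) ≤ β + 4 ^ k * ε) (norm_nonneg _)]
        calc β + 4 ^ (k + 1) * ε ≤ ‖Z (N + k)‖ ^ 2 - c := this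
          _ ≤ ‖Z (N + k + 1)‖ := h1
        
    obtain ⟨k, hk⟩ := pow_unbounded_of_one_lt (C / ε) (by norm_num : (1:ℝ) < 4)
    have h1 : C < 4 ^ k * ε := by
      rw [div_lt_iff₀ hε] at hk
      linarith
    have h2 := grow k
    have h3 := hCb (N + k)
    linarith
  have hB : ∀ n, (Z n).re ^ 2 + (Z n).im ^ 2 ≤ β ^ 2 := by
    intro n
    have h1 := hBall n
    have h2 : ‖Z n‖ ^ 2 = (Z n).re ^ 2 + (Z n).im ^ 2 := by
      rw [Complex.sq_norm, Complex.normSq_apply]; ring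
    nlinarith [norm_nonneg (Z n)]
  -- now the contradiction argument
  by_contra him
  have hz0 : (Z 0).im = z.im := by simp [hZdef]
  have hu : ∀ n, 0 < (Z n).im ^ 2 := by
    intro n
    induction n with
    | zero => rw [hz0]; positivity
    | succ n ih =>
      have hyne : (Z n).im ≠ 0 := by
        intro h0; rw [h0] at ih; simp at ih
      have hxne : (Z n).re ≠ 0 := by
        intro h0
        have h1 := hx n
        rw [h0] at h1
        have h2 := hB (n + 1)
        nlinarith [ih, hβ2, hβeq, sq_nonneg ((Z (n+1)).im), hc]
      rw [hy n]
      positivity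
  have hD : ∀ n, 0 < β ^ 2 - (Z n).re ^ 2 := by
    intro n
    have := hB n
    have := hu n
    linarith
  -- the key expansion estimate
  have hφstep : ∀ n, 2 * ((Z n).im ^ 2 / (β ^ 2 - (Z n).re ^ 2)) ≤
      (Z (n+1)).im ^ 2 / (β ^ 2 - (Z (n+1)).re ^ 2) := by
    intro n
    rw [← mul_div_assoc, div_le_div_iff₀ (hD n) (hD (n+1))]
    rw [hx n, hy n]
    have ea : a = β - β ^ 2 := by
      have : c = -a := hcdef
      linarith [hβeq]
    rw [ea]
    have h1 := hB n
    have hu' := hu n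
    have hm : 0 ≤ β ^ 2 - 2 * β := by nlinarith
    nlinarith [mul_nonneg (mul_nonneg hu'.le (sq_nonneg (Z n).re))
        (by linarith : (0:ℝ) ≤ β ^ 2 - (Z n).re ^ 2 - (Z n).im ^ 2),
      mul_nonneg (mul_nonneg hu'.le (sq_nonneg (Z n).im))
        (by linarith : (0:ℝ) ≤ (Z n).im ^ 2 + (β ^ 2 - 2 * β)),
      mul_nonneg (mul_nonneg hu'.le (hD n).le)
        (by linarith : (0:ℝ) ≤ (Z n).im ^ 2 + (β ^ 2 - 2 * β))]
  have hgrow : ∀ n, 2 ^ n * ((Z 0).im ^ 2 / (β ^ 2 - (Z 0).re ^ 2)) ≤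
      (Z n).im ^ 2 / (β ^ 2 - (Z n).re ^ 2) := by
    intro n
    induction n with
    | zero => simp
    | succ n ih =>
      have h1 := hφstep n
      calc 2 ^ (n+1) * ((Z 0).im ^ 2 / (β ^ 2 - (Z 0).re ^ 2))
          = 2 * (2 ^ n * ((Z 0).im ^ 2 / (β ^ 2 - (Z 0).re ^ 2))) := by ring
        _ ≤ 2 * ((Z n).im ^ 2 / (β ^ 2 - (Z n).re ^ 2)) := by linarith
        _ ≤ _ := h1
  have hφ0 : 0 < (Z 0).im ^ 2 / (β ^ 2 - (Z 0).re ^ 2) := div_pos (hu 0) (hD 0)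
  have hφle : ∀ n, (Z n).im ^ 2 / (β ^ 2 - (Z n).re ^ 2) ≤ 1 := by
    intro n
    rw [div_le_one (hD n)]
    linarith [hB n]
  obtain ⟨n, hn⟩ := pow_unbounded_of_one_lt
      (1 / ((Z 0).im ^ 2 / (β ^ 2 - (Z 0).re ^ 2))) (by norm_num : (1:ℝ) < 2)
  rw [div_lt_iff₀ hφ0] at hn
  have h1 := hgrow n
  have h2 := hφle n
  nlinarith
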